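/- There exists a constant c > 0 such that for every integer k ≥ 1 there are infinitely many integers N for which there exists a simple graph G on N vertices with vertices s and t, and two s–t shortest paths P and Q in G, such that P and Q are k-reconfigurable but every sequence of k-moves transforming P into Q has length at least 2^{cN/k}. -/

import Mathlib

/-- `kMove k l₁ l₂`: the two vertex sequences have the same length and agree
everywhere except possibly on a contiguous block of at most `k` internal positions
(positions `a, …, a + m - 1` with `m ≤ k`, `1 ≤ a`, and `a + m - 1 ≤ length - 2`). -/
def kMove {α : Type*} (k : ℕ) (l₁ l₂ : List α) : Prop :=
  l₁.length = l₂.length ∧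
    ∃ a m : ℕ, m ≤ k ∧ 1 ≤ a ∧ a + m + 1 ≤ l₁.length ∧
      ∀ j : ℕ, j < a ∨ a + m ≤ j → l₁[j]? = l₂[j]?

/-- One `k`-move between `s`–`t` shortest paths. -/
def KStep {V : Type*} (G : SimpleGraph V) (s t : V) (k : ℕ) (p q : G.Walk s t) : Prop :=
  p.length = G.dist s t ∧ q.length = G.dist s t ∧ kMove k p.support q.support

/-- Two `s`–`t` shortest paths are `k`-reconfigurable if they are joined by a
sequence of `s`–`t` shortest paths in which consecutive paths differ by a `k`-move. -/
def KReconfigurable {V : Type*} (G : SimpleGraph V) (s t : V) (k : ℕ)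
    (p q : G.Walk s t) : Prop :=
  Relation.ReflTransGen (KStep G s t k) p q

/-- The minimum number of `k`-moves needed to transform one `s`–`t` shortest path
into another. -/
noncomputable def kReconfDist {V : Type*} (G : SimpleGraph V) (s t : V) (k : ℕ)
    (P Q : G.Walk s t) : ℕ :=
  sInf {n : ℕ | ∃ f : ℕ → G.Walk s t, f 0 = P ∧ f n = Q ∧
    (∀ i ≤ n, (f i).length = G.dist s t) ∧
    ∀ i < n, kMove k (f i).support (f (i + 1)).support}

/-- The `k`-SPR reconfiguration graph of `(G, s, t)`: one vertex for each `s`–`t`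
shortest path, two paths being adjacent when they differ by a `k`-move. -/
def kSPRGraph {V : Type*} (G : SimpleGraph V) (s t : V) (k : ℕ) :
    SimpleGraph {p : G.Walk s t // p.length = G.dist s t} where
  Adj p q := p ≠ q ∧ kMove k p.1.support q.1.support
  symm := by
    constructor
    rintro p q ⟨hne, hlen, a, m, h1, h2, h3, h4⟩
    exact ⟨hne.symm, hlen.symm, a, m, h1, h2, hlen ▸ h3, fun j hj => (h4 j hj).symm⟩
  loopless := by constructor; intro p h; exact h.1 rfl

namespace KRec

def aLet (j : ℕ) : ℕ := if j = 1 then 0 else 2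
def bLet (j : ℕ) : ℕ := if j = 1 then 1 else 3

def D2 (a b : ℕ) : Prop :=
  (b = 0 ∧ (a = 0 ∨ a = 2 ∨ a = 3)) ∨ (b = 1 ∧ (a = 1 ∨ a = 3 ∨ a = 4)) ∨
  (b = 2 ∧ a = 2) ∨ (b = 3 ∧ a = 4)

def BndR (j a b : ℕ) : Prop :=
  b = 0 ∨ b = 1 ∨ ((b = 2 ∨ b = 4) ∧ a = aLet j) ∨ (b = 3 ∧ a = bLet j)

def RC (j a b : ℕ) : Prop :=
  if j = 0 then True else if j % 2 = 0 then D2 a b else BndR j a b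

def szCSP (ℓ : ℕ) : ℕ := if ℓ = 1 then 2 else if ℓ % 2 = 0 then 5 else 4

def Valid (m : ℕ) (w : ℕ → ℕ) : Prop :=
  (∀ ℓ, 1 ≤ ℓ → ℓ + 2 ≤ 2*m → RC ℓ (w ℓ) (w (ℓ+1))) ∧
  (∀ ℓ, 1 ≤ ℓ → ℓ + 1 ≤ 2*m → w ℓ < szCSP ℓ)

def alphaW : ℕ → ℕ := fun ℓ => if ℓ = 1 then 0 else 2

def betaW (m : ℕ) : ℕ → ℕ := fun ℓ =>
  if m = 1 then (if ℓ = 1 then 1 else 2)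
  else if ℓ = 2*m-2 then 4 else if ℓ = 2*m-1 then 3 else alphaW ℓ

def Nv (m : ℕ) : ℕ := 2^(m+2) - 7

def phi : ℕ → (ℕ → ℕ) → ℕ
  | 0, _ => 0
  | 1, w => min (w 1) 1
  | (q+2), w =>
    if w (2*q+2) = 2 then (if w (2*q+3) = 2 then 0 else 1)
    else if w (2*q+2) = 0 then 2 + phi (q+1) w
    else if w (2*q+2) = 3 then (if w (2*q+3) = 0 then Nv (q+1) + 3 else Nv (q+1) + 4)
    else if w (2*q+2) = 1 then Nv (q+1) + 5 + (Nv (q+1) - phi (q+1) w)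
    else (if w (2*q+3) = 1 then 2*Nv (q+1) + 6 else 2*Nv (q+1) + 7)

lemma Nv_succ (m : ℕ) (hm : 1 ≤ m) : Nv (m+1) = 2 * Nv m + 7 := by
  obtain ⟨q, rfl⟩ := Nat.exists_eq_add_of_le hm
  have h : (2:ℕ)^(1+q+2) = 2^q * 8 := by ring
  have h2 : (2:ℕ)^(1+q+3) = 2^q * 16 := by ring
  have h3 : 1 ≤ (2:ℕ)^q := Nat.one_le_two_pow
  simp only [Nv, h, h2]
  omega

lemma Nv_pos (m : ℕ) (hm : 1 ≤ m) : 1 ≤ Nv m := by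
  obtain ⟨q, rfl⟩ := Nat.exists_eq_add_of_le hm
  have h : (2:ℕ)^(1+q+2) = 2^q * 8 := by ring
  have h3 : 1 ≤ (2:ℕ)^q := Nat.one_le_two_pow
  simp only [Nv, h]; omega

lemma phi_le (m : ℕ) (w : ℕ → ℕ) : phi m w ≤ Nv m := by
  induction m with
  | zero => simp [phi, Nv]
  | succ q ih =>
    match q, ih with
    | 0, _ => simp only [phi, Nv]; omega
    | (p+1), ih =>
      have hs := Nv_succ (p+1) (by omega)
      simp only [phi]
      split_ifs <;> omega

lemma phi_congr : ∀ (m : ℕ) (v w : ℕ → ℕ),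
    (∀ ℓ, 1 ≤ ℓ → ℓ + 1 ≤ 2*m → v ℓ = w ℓ) → phi m v = phi m w := by
  intro m
  induction m with
  | zero => intro v w h; rfl
  | succ q ih =>
    intro v w h
    match q, ih with
    | 0, _ => simp only [phi]; rw [h 1 (by omega) (by omega)]
    | (p+1), ih =>
      have h1 : v (2*p+2) = w (2*p+2) := h _ (by omega) (by omega)
      have h2 : v (2*p+3) = w (2*p+3) := h _ (by omega) (by omega)
      have h3 : phi (p+1) v = phi (p+1) w := ih v w (fun ℓ a b => h ℓ a (by omega))
      simp only [phi, h1, h2, h3]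

lemma valid_down {m : ℕ} {v : ℕ → ℕ} (h : Valid (m+1) v) : Valid m v :=
  ⟨fun ℓ h1 h2 => h.1 ℓ h1 (by omega), fun ℓ h1 h2 => h.2 ℓ h1 (by omega)⟩

lemma valid_d1 {q : ℕ} {v : ℕ → ℕ} (h : Valid (q+2) v) : v (2*q+2) < 5 := by
  have := h.2 (2*q+2) (by omega) (by omega)
  simpa [szCSP, Nat.mul_add_mod, show 2*q+2 ≠ 1 by omega, Nat.add_mul_mod_self_left] using this

lemma valid_d2 {q : ℕ} {v : ℕ → ℕ} (h : Valid (q+2) v) : v (2*q+3) < 4 := by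
  have := h.2 (2*q+3) (by omega) (by omega)
  have h1 : (2*q+3) % 2 = 1 := by omega
  simpa [szCSP, h1, show 2*q+3 ≠ 1 by omega] using this

lemma valid_Ra {q : ℕ} {v : ℕ → ℕ} (h : Valid (q+2) v) :
    BndR (2*q+1) (v (2*q+1)) (v (2*q+2)) := by
  have := h.1 (2*q+1) (by omega) (by omega)
  have h1 : (2*q+1) % 2 = 1 := by omega
  simpa [RC, h1, show 2*q+1 ≠ 0 by omega] using this

lemma valid_Rb {q : ℕ} {v : ℕ → ℕ} (h : Valid (q+2) v) :
    D2 (v (2*q+2)) (v (2*q+3)) := by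
  have := h.1 (2*q+2) (by omega) (by omega)
  have h1 : (2*q+2) % 2 = 0 := by omega
  simpa [RC, h1, show 2*q+2 ≠ 0 by omega] using this


lemma betaW_eq (p ℓ : ℕ) :
    betaW (p+2) ℓ = if ℓ = 2*p+2 then 4 else if ℓ = 2*p+3 then 3 else alphaW ℓ := by
  simp only [betaW, show (p+2:ℕ) ≠ 1 by omega, if_false,
    show 2*(p+2)-2 = 2*p+2 by omega, show 2*(p+2)-1 = 2*p+3 by omega]

lemma uniq_a : ∀ (q : ℕ) (v : ℕ → ℕ), Valid (q+1) v → v (2*q+1) = aLet (2*q+1) →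
    ∀ ℓ, 1 ≤ ℓ → ℓ ≤ 2*q+1 → v ℓ = alphaW ℓ := by
  intro q
  induction q with
  | zero =>
    intro v _ hp ℓ h1 h2
    have : ℓ = 1 := by omega
    subst this
    simpa [aLet, alphaW] using hp
  | succ p ih =>
    intro v hv hp ℓ h1 h2
    have hp2 : v (2*p+3) = 2 := by simpa [aLet, show 2*(p+1)+1 ≠ 1 by omega, show 2*(p+1)+1 = 2*p+3 by omega] using hp
    have hd2 : v (2*p+2) = 2 := by
      rcases valid_Rb (q := p) hv with ⟨h,_⟩|⟨h,_⟩|⟨h,ha⟩|⟨h,_⟩ <;> omega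
    have hpin : v (2*p+1) = aLet (2*p+1) := by
      rcases valid_Ra (q := p) hv with h|h|⟨h,ha⟩|⟨h,ha⟩ <;> omega
    rcases Nat.lt_or_ge ℓ (2*p+2) with hc | hc
    · exact ih v (valid_down hv) hpin ℓ h1 (by omega)
    · have hℓ : ℓ = 2*p+2 ∨ ℓ = 2*p+3 := by omega
      rcases hℓ with rfl | rfl
      · simp [alphaW, hd2, show 2*p+2 ≠ 1 by omega]
      · simp [alphaW, hp2, show 2*p+3 ≠ 1 by omega]

lemma uniq_b : ∀ (q : ℕ) (v : ℕ → ℕ), Valid (q+1) v → v (2*q+1) = bLet (2*q+1) →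
    ∀ ℓ, 1 ≤ ℓ → ℓ ≤ 2*q+1 → v ℓ = betaW (q+1) ℓ := by
  intro q
  induction q with
  | zero =>
    intro v _ hp ℓ h1 h2
    have : ℓ = 1 := by omega
    subst this
    simpa [bLet, betaW] using hp
  | succ p _ =>
    intro v hv hp ℓ h1 h2
    have hp2 : v (2*p+3) = 3 := by simpa [bLet, show 2*(p+1)+1 ≠ 1 by omega, show 2*(p+1)+1 = 2*p+3 by omega] using hp
    have hd2 : v (2*p+2) = 4 := by
      rcases valid_Rb (q := p) hv with ⟨h,_⟩|⟨h,_⟩|⟨h,ha⟩|⟨h,ha⟩ <;> omega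
    have hpin : v (2*p+1) = aLet (2*p+1) := by
      rcases valid_Ra (q := p) hv with h|h|⟨h,ha⟩|⟨h,ha⟩ <;> omega
    have hα := uniq_a p v (valid_down hv) hpin
    have hm : (p+1+1 : ℕ) ≠ 1 := by omega
    have hb := betaW_eq p
    rcases Nat.lt_or_ge ℓ (2*p+2) with hc | hc
    · rw [hα ℓ h1 (by omega), hb ℓ, if_neg (by omega), if_neg (by omega)]
    · have hℓ : ℓ = 2*p+2 ∨ ℓ = 2*p+3 := by omega
      rcases hℓ with rfl | rfl
      · rw [hb, if_pos rfl]; omega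
      · rw [hb, if_neg (by omega), if_pos rfl]; omega

lemma phi_alpha : ∀ m, phi m alphaW = 0 := by
  intro m
  match m with
  | 0 => rfl
  | 1 => simp [phi, alphaW]
  | (q+2) =>
    have h1 : alphaW (2*q+2) = 2 := by simp [alphaW]
    have h2 : alphaW (2*q+3) = 2 := by simp [alphaW]
    simp [phi, h1, h2]

lemma beta_last (q : ℕ) : betaW (q+1) (2*q+1) = bLet (2*q+1) := by
  match q with
  | 0 => simp [betaW, bLet]
  | (p+1) =>
    rw [betaW_eq, if_neg (by omega), if_pos (by omega)]
    simp [bLet]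

lemma phi_beta : ∀ q, phi (q+1) (betaW (q+1)) = Nv (q+1) := by
  intro q
  match q with
  | 0 => simp [phi, betaW, Nv]
  | (p+1) =>
    have h1 : betaW (p+2) (2*p+2) = 4 := by rw [betaW_eq, if_pos rfl]
    have h2 : betaW (p+2) (2*p+3) = 3 := by
      rw [betaW_eq, if_neg (by omega), if_pos rfl]
    have hs := Nv_succ (p+1) (by omega)
    simp only [phi, h1, h2]
    norm_num
    omega

lemma valid_alpha (m : ℕ) : Valid m alphaW := by
  constructor
  · intro ℓ h1 h2
    have hne : ℓ + 1 ≠ 1 := by omega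
    rcases Nat.even_or_odd ℓ with he | ho
    · have hm2 : ℓ % 2 = 0 := Nat.even_iff.mp he
      have hℓ2 : ℓ ≠ 1 := by omega
      simp only [RC, if_neg (by omega : ℓ ≠ 0), if_pos hm2, D2, alphaW, if_neg hℓ2, if_neg hne]
      tauto
    · have hm2 : ℓ % 2 = 1 := Nat.odd_iff.mp ho
      simp only [RC, if_neg (by omega : ℓ ≠ 0), if_neg (by omega : ¬ ℓ % 2 = 0), BndR, alphaW,
        if_neg hne, aLet]
      tauto
  · intro ℓ h1 h2
    simp only [alphaW, szCSP]
    split_ifs <;> omega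

lemma valid_beta : ∀ q, Valid (q+1) (betaW (q+1)) := by
  intro q
  match q with
  | 0 =>
    constructor
    · intro ℓ h1 h2; omega
    · intro ℓ h1 h2
      have : ℓ = 1 := by omega
      subst this; simp [betaW, szCSP]
  | (p+1) =>
    have hm : (p+2 : ℕ) ≠ 1 := by omega
    have hb : ∀ ℓ, ℓ ≤ 2*p+1 → betaW (p+2) ℓ = alphaW ℓ := by
      intro ℓ hℓ
      rw [betaW_eq, if_neg (by omega), if_neg (by omega)]
    have h1 : betaW (p+2) (2*p+2) = 4 := by rw [betaW_eq, if_pos rfl]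
    have h2 : betaW (p+2) (2*p+3) = 3 := by
      rw [betaW_eq, if_neg (by omega), if_pos rfl]
    have hαv := valid_alpha (p+1)
    constructor
    · intro ℓ hℓ1 hℓ2
      rcases Nat.lt_or_ge ℓ (2*p+1) with hc | hc
      · rw [hb ℓ (by omega), hb (ℓ+1) (by omega)]
        exact (valid_alpha (p+2)).1 ℓ hℓ1 (by omega)
      · have : ℓ = 2*p+1 ∨ ℓ = 2*p+2 := by omega
        rcases this with rfl | rfl
        · rw [hb _ (by omega), h1]
          have hmod : (2*p+1) % 2 = 1 := by omega
          simp only [RC, if_neg (by omega : 2*p+1 ≠ 0), if_neg (by omega : ¬ (2*p+1) % 2 = 0), BndR]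
          right; right; left
          exact ⟨by simp, by simp only [alphaW, aLet]⟩
        · rw [h1, h2]
          have hmod : (2*p+2) % 2 = 0 := by omega
          simp only [RC, if_neg (by omega : 2*p+2 ≠ 0), if_pos hmod, D2]
          tauto
    · intro ℓ hℓ1 hℓ2
      rcases Nat.lt_or_ge ℓ (2*p+2) with hc | hc
      · rw [hb ℓ (by omega)]
        simp only [alphaW, szCSP]; split_ifs <;> omega
      · have : ℓ = 2*p+2 ∨ ℓ = 2*p+3 := by omega
        rcases this with rfl | rfl
        · rw [h1]; simp only [szCSP]
          rw [if_neg (by omega), if_pos (by omega)]; omega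
        · rw [h2]; simp only [szCSP]
          rw [if_neg (by omega), if_neg (by omega)]; omega


lemma alpha_last (q : ℕ) : alphaW (2*q+1) = aLet (2*q+1) := by
  simp only [alphaW, aLet]

lemma phi_pin_a {q : ℕ} {v : ℕ → ℕ} (hv : Valid (q+1) v)
    (hpin : v (2*q+1) = aLet (2*q+1)) : phi (q+1) v = 0 := by
  rw [phi_congr (q+1) v alphaW (fun ℓ h1 h2 => uniq_a q v hv hpin ℓ h1 (by omega)), phi_alpha]

lemma phi_pin_b {q : ℕ} {v : ℕ → ℕ} (hv : Valid (q+1) v)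
    (hpin : v (2*q+1) = bLet (2*q+1)) : phi (q+1) v = Nv (q+1) := by
  rw [phi_congr (q+1) v (betaW (q+1)) (fun ℓ h1 h2 => uniq_b q v hv hpin ℓ h1 (by omega)),
    phi_beta]

lemma pin_a' {p : ℕ} {v : ℕ → ℕ} (hv : Valid (p+2) v)
    (h : v (2*p+2) = 2 ∨ v (2*p+2) = 4) :
    phi (p+1) v = 0 ∧ v (2*p+1) = aLet (2*p+1) := by
  rcases valid_Ra hv with h1|h1|⟨h1,h2⟩|⟨h1,h2⟩
  · omega
  · omega
  · exact ⟨phi_pin_a (valid_down hv) h2, h2⟩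
  · omega

lemma pin_b' {p : ℕ} {v : ℕ → ℕ} (hv : Valid (p+2) v)
    (h : v (2*p+2) = 3) :
    phi (p+1) v = Nv (p+1) ∧ v (2*p+1) = bLet (2*p+1) := by
  rcases valid_Ra hv with h1|h1|⟨h1,h2⟩|⟨h1,h2⟩
  · omega
  · omega
  · omega
  · exact ⟨phi_pin_b (valid_down hv) h2, h2⟩

lemma aLet_ne_bLet (j : ℕ) : aLet j ≠ bLet j := by
  simp only [aLet, bLet]; split_ifs <;> omega

set_option maxHeartbeats 2000000 in
lemma move : ∀ (m : ℕ) (v w : ℕ → ℕ), Valid m v → Valid m w → ∀ (ℓ₀ : ℕ),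
    (∀ ℓ, ℓ ≠ ℓ₀ → v ℓ = w ℓ) → phi m w ≤ phi m v + 1 ∧ phi m v ≤ phi m w + 1 := by
  intro m
  induction m with
  | zero => intro v w _ _ _ _; simp [phi]
  | succ q ih =>
    intro v w hv hw ℓ₀ h
    match q, ih with
    | 0, _ => simp only [phi]; omega
    | (p+1), ih =>
      have lv := phi_le (p+1) v
      have lw := phi_le (p+1) w
      have hNv := Nv_pos (p+1) (by omega)
      by_cases hA : ℓ₀ = 2*p+2
      · subst hA
        have hd2 : v (2*p+3) = w (2*p+3) := h _ (by omega)
        have hprev : v (2*p+1) = w (2*p+1) := h _ (by omega)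
        have hphi : phi (p+1) v = phi (p+1) w :=
          phi_congr _ _ _ (fun ℓ h1 h2 => h ℓ (by omega))
        have hab := aLet_ne_bLet (2*p+1)
        rcases valid_Rb hv with ⟨e1,e2|e2|e2⟩|⟨e1,e2|e2|e2⟩|⟨e1,e2⟩|⟨e1,e2⟩ <;>
          rcases valid_Rb hw with ⟨f1,f2|f2|f2⟩|⟨f1,f2|f2|f2⟩|⟨f1,f2⟩|⟨f1,f2⟩ <;>
          first
            | omega
            | (try have hva := pin_a' hv (by omega)
               try have hvb := pin_b' hv (by omega)
               try have hwa := pin_a' hw (by omega)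
               try have hwb := pin_b' hw (by omega)
               simp only [phi, e1, e2, f1, f2]
               norm_num
               try omega)
      · by_cases hB : ℓ₀ = 2*p+3
        · subst hB
          have hd1 : v (2*p+2) = w (2*p+2) := h _ (by omega)
          have hphi : phi (p+1) v = phi (p+1) w :=
            phi_congr _ _ _ (fun ℓ h1 h2 => h ℓ (by omega))
          rcases valid_Rb hv with ⟨e1,e2|e2|e2⟩|⟨e1,e2|e2|e2⟩|⟨e1,e2⟩|⟨e1,e2⟩ <;>
            rcases valid_Rb hw with ⟨f1,f2|f2|f2⟩|⟨f1,f2|f2|f2⟩|⟨f1,f2⟩|⟨f1,f2⟩ <;>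
            first
              | omega
              | (simp only [phi, e1, e2, f1, f2]
                 norm_num
                 try omega)
        · have hd1 : v (2*p+2) = w (2*p+2) := h _ (Ne.symm hA)
          have hd2 : v (2*p+3) = w (2*p+3) := h _ (Ne.symm hB)
          have ihp := ih v w (valid_down hv) (valid_down hw) ℓ₀ h
          simp only [phi, ← hd1, ← hd2]
          split_ifs <;> omega

def relM (m : ℕ) (v w : ℕ → ℕ) : Prop :=
  Valid m v ∧ Valid m w ∧ ∃ ℓ₀, ∀ ℓ, ℓ ≠ ℓ₀ → v ℓ = w ℓ

lemma relM_symm (m : ℕ) : Symmetric (relM m) := by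
  rintro v w ⟨a, b, ℓ₀, hd⟩
  exact ⟨b, a, ℓ₀, fun ℓ hh => (hd ℓ hh).symm⟩

def ExtW (q : ℕ) (w : ℕ → ℕ) (d1 d2 : ℕ) : ℕ → ℕ :=
  fun ℓ => if ℓ = 2*q+2 then d1 else if ℓ = 2*q+3 then d2 else w ℓ

lemma RC_odd {j a b : ℕ} (hj : j % 2 = 1) : RC j a b ↔ BndR j a b := by
  rw [RC, if_neg (by omega : j ≠ 0), if_neg (by omega : ¬ j % 2 = 0)]

lemma RC_even {j a b : ℕ} (hj0 : j ≠ 0) (hj : j % 2 = 0) : RC j a b ↔ D2 a b := by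
  rw [RC, if_neg hj0, if_pos hj]

lemma ExtW_at1 (q : ℕ) (w : ℕ → ℕ) (d1 d2 : ℕ) : ExtW q w d1 d2 (2*q+2) = d1 := by
  unfold ExtW; rw [if_pos rfl]

lemma ExtW_at2 (q : ℕ) (w : ℕ → ℕ) (d1 d2 : ℕ) : ExtW q w d1 d2 (2*q+3) = d2 := by
  unfold ExtW; rw [if_neg (show ¬ (2*q+3 = 2*q+2) by omega), if_pos rfl]

lemma ExtW_out (q : ℕ) (w : ℕ → ℕ) (d1 d2 : ℕ) {ℓ : ℕ} (h1 : ℓ ≠ 2*q+2) (h2 : ℓ ≠ 2*q+3) :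
    ExtW q w d1 d2 ℓ = w ℓ := by
  unfold ExtW; rw [if_neg h1, if_neg h2]

lemma valid_Ext {q : ℕ} {w : ℕ → ℕ} {d1 d2 : ℕ} (hw : Valid (q+1) w)
    (h1 : d1 < 5) (h2 : d2 < 4) (hB : BndR (2*q+1) (w (2*q+1)) d1) (hD : D2 d1 d2) :
    Valid (q+2) (ExtW q w d1 d2) := by
  constructor
  · intro ℓ hl1 hl2
    rcases (by omega : ℓ + 1 ≤ 2*q+1 ∨ ℓ = 2*q+1 ∨ ℓ = 2*q+2) with hc | hc | hc
    · rw [ExtW_out q w d1 d2 (by omega) (by omega), ExtW_out q w d1 d2 (by omega) (by omega)]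
      exact hw.1 ℓ hl1 (by omega)
    · subst hc
      rw [ExtW_out q w d1 d2 (by omega) (by omega), show (2*q+1+1) = 2*q+2 by omega,
        ExtW_at1, RC_odd (by omega)]
      exact hB
    · subst hc
      rw [ExtW_at1, show (2*q+2+1) = 2*q+3 by omega, ExtW_at2, RC_even (by omega) (by omega)]
      exact hD
  · intro ℓ hl1 hl2
    rcases (by omega : ℓ + 1 ≤ 2*q+2 ∨ ℓ = 2*q+2 ∨ ℓ = 2*q+3) with hc | hc | hc
    · rw [ExtW_out q w d1 d2 (by omega) (by omega)]
      exact hw.2 ℓ hl1 (by omega)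
    · subst hc
      rw [ExtW_at1]
      simp only [szCSP]
      rw [if_neg (show ¬ (2*q+2 = 1) by omega), if_pos (show (2*q+2) % 2 = 0 by omega)]
      exact h1
    · subst hc
      rw [ExtW_at2]
      simp only [szCSP]
      rw [if_neg (show ¬ (2*q+3 = 1) by omega),
        if_neg (show ¬ ((2*q+3) % 2 = 0) by omega)]
      exact h2

lemma ext_congr {q : ℕ} {v w : ℕ → ℕ} (d1 d2 : ℕ) {ℓ₀ : ℕ}
    (h : ∀ ℓ, ℓ ≠ ℓ₀ → v ℓ = w ℓ) :
    ∀ ℓ, ℓ ≠ ℓ₀ → ExtW q v d1 d2 ℓ = ExtW q w d1 d2 ℓ := by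
  intro ℓ hh
  by_cases h1 : ℓ = 2*q+2
  · subst h1; rw [ExtW_at1, ExtW_at1]
  · by_cases h2 : ℓ = 2*q+3
    · subst h2; rw [ExtW_at2, ExtW_at2]
    · rw [ExtW_out q v d1 d2 h1 h2, ExtW_out q w d1 d2 h1 h2]
      exact h ℓ hh

lemma ext_move1 (q : ℕ) (w : ℕ → ℕ) (d1 d2 d2' : ℕ) :
    ∀ ℓ, ℓ ≠ 2*q+3 → ExtW q w d1 d2 ℓ = ExtW q w d1 d2' ℓ := by
  intro ℓ hh
  by_cases h1 : ℓ = 2*q+2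
  · subst h1; rw [ExtW_at1, ExtW_at1]
  · rw [ExtW_out q w d1 d2 h1 hh, ExtW_out q w d1 d2' h1 hh]

lemma ext_move2 (q : ℕ) (w : ℕ → ℕ) (d1 d1' d2 : ℕ) :
    ∀ ℓ, ℓ ≠ 2*q+2 → ExtW q w d1 d2 ℓ = ExtW q w d1' d2 ℓ := by
  intro ℓ hh
  by_cases h2 : ℓ = 2*q+3
  · subst h2; rw [ExtW_at2, ExtW_at2]
  · rw [ExtW_out q w d1 d2 hh h2, ExtW_out q w d1' d2 hh h2]

lemma chain : ∀ q, Relation.ReflTransGen (relM (q+1)) alphaW (betaW (q+1)) := by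
  intro q
  induction q with
  | zero =>
    refine Relation.ReflTransGen.single ⟨valid_alpha 1, valid_beta 0, 1, ?_⟩
    intro ℓ hh
    simp [alphaW, betaW, hh]
  | succ p ihc =>
    have hA1 : Valid (p+1) alphaW := valid_alpha (p+1)
    have hB1 : Valid (p+1) (betaW (p+1)) := valid_beta p
    have aa := alpha_last p
    have bb := beta_last p
    -- validities
    have V22 : Valid (p+2) (ExtW p alphaW 2 2) :=
      valid_Ext hA1 (by omega) (by omega)
        (Or.inr (Or.inr (Or.inl ⟨Or.inl rfl, aa⟩))) (by norm_num [D2])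
    have V20 : Valid (p+2) (ExtW p alphaW 2 0) :=
      valid_Ext hA1 (by omega) (by omega)
        (Or.inr (Or.inr (Or.inl ⟨Or.inl rfl, aa⟩))) (by norm_num [D2])
    have V00 : Valid (p+2) (ExtW p alphaW 0 0) :=
      valid_Ext hA1 (by omega) (by omega) (Or.inl rfl) (by norm_num [D2])
    have V00B : Valid (p+2) (ExtW p (betaW (p+1)) 0 0) :=
      valid_Ext hB1 (by omega) (by omega) (Or.inl rfl) (by norm_num [D2])
    have V30 : Valid (p+2) (ExtW p (betaW (p+1)) 3 0) :=
      valid_Ext hB1 (by omega) (by omega)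
        (Or.inr (Or.inr (Or.inr ⟨rfl, bb⟩))) (by norm_num [D2])
    have V31 : Valid (p+2) (ExtW p (betaW (p+1)) 3 1) :=
      valid_Ext hB1 (by omega) (by omega)
        (Or.inr (Or.inr (Or.inr ⟨rfl, bb⟩))) (by norm_num [D2])
    have V11B : Valid (p+2) (ExtW p (betaW (p+1)) 1 1) :=
      valid_Ext hB1 (by omega) (by omega) (Or.inr (Or.inl rfl)) (by norm_num [D2])
    have V11A : Valid (p+2) (ExtW p alphaW 1 1) :=
      valid_Ext hA1 (by omega) (by omega) (Or.inr (Or.inl rfl)) (by norm_num [D2])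
    have V41 : Valid (p+2) (ExtW p alphaW 4 1) :=
      valid_Ext hA1 (by omega) (by omega)
        (Or.inr (Or.inr (Or.inl ⟨Or.inr rfl, aa⟩))) (by norm_num [D2])
    have V43 : Valid (p+2) (ExtW p alphaW 4 3) :=
      valid_Ext hA1 (by omega) (by omega)
        (Or.inr (Or.inr (Or.inl ⟨Or.inr rfl, aa⟩))) (by norm_num [D2])
    -- lifted segments
    have S1 : Relation.ReflTransGen (relM (p+2))
        (ExtW p alphaW 0 0) (ExtW p (betaW (p+1)) 0 0) := by
      refine Relation.ReflTransGen.lift (fun w => ExtW p w 0 0) ?_ _ _ ihc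
      rintro a b ⟨ha, hb, ℓ₀, hd⟩
      exact ⟨valid_Ext ha (by omega) (by omega) (Or.inl rfl) (by norm_num [D2]),
        valid_Ext hb (by omega) (by omega) (Or.inl rfl) (by norm_num [D2]),
        ℓ₀, ext_congr 0 0 hd⟩
    have S2 : Relation.ReflTransGen (relM (p+2))
        (ExtW p (betaW (p+1)) 1 1) (ExtW p alphaW 1 1) := by
      refine Relation.ReflTransGen.lift (fun w => ExtW p w 1 1) ?_
        _ _ ((@Relation.ReflTransGen.stdSymm _ _ ⟨fun a b h => relM_symm (p+1) h⟩).symm _ _ ihc)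
      rintro a b ⟨ha, hb, ℓ₀, hd⟩
      exact ⟨valid_Ext ha (by omega) (by omega) (Or.inr (Or.inl rfl)) (by norm_num [D2]),
        valid_Ext hb (by omega) (by omega) (Or.inr (Or.inl rfl)) (by norm_num [D2]),
        ℓ₀, ext_congr 1 1 hd⟩
    -- endpoints
    have eA : alphaW = ExtW p alphaW 2 2 := by
      funext ℓ
      by_cases h1 : ℓ = 2*p+2
      · subst h1; rw [ExtW_at1]; simp [alphaW]
      · by_cases h2 : ℓ = 2*p+3
        · subst h2; rw [ExtW_at2]; simp [alphaW]
        · rw [ExtW_out p alphaW 2 2 h1 h2]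
    have eB : ExtW p alphaW 4 3 = betaW (p+2) := by
      funext ℓ
      rw [betaW_eq]
      by_cases h1 : ℓ = 2*p+2
      · subst h1; rw [ExtW_at1, if_pos rfl]
      · by_cases h2 : ℓ = 2*p+3
        · subst h2; rw [ExtW_at2, if_neg h1, if_pos rfl]
        · rw [ExtW_out p alphaW 4 3 h1 h2, if_neg h1, if_neg h2]
    rw [eA, ← eB]
    have t1 : relM (p+2) (ExtW p alphaW 2 2) (ExtW p alphaW 2 0) :=
      ⟨V22, V20, 2*p+3, ext_move1 p _ 2 2 0⟩
    have t2 : relM (p+2) (ExtW p alphaW 2 0) (ExtW p alphaW 0 0) :=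
      ⟨V20, V00, 2*p+2, ext_move2 p _ 2 0 0⟩
    have t3 : relM (p+2) (ExtW p (betaW (p+1)) 0 0) (ExtW p (betaW (p+1)) 3 0) :=
      ⟨V00B, V30, 2*p+2, ext_move2 p _ 0 3 0⟩
    have t4 : relM (p+2) (ExtW p (betaW (p+1)) 3 0) (ExtW p (betaW (p+1)) 3 1) :=
      ⟨V30, V31, 2*p+3, ext_move1 p _ 3 0 1⟩
    have t5 : relM (p+2) (ExtW p (betaW (p+1)) 3 1) (ExtW p (betaW (p+1)) 1 1) :=
      ⟨V31, V11B, 2*p+2, ext_move2 p _ 3 1 1⟩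
    have t6 : relM (p+2) (ExtW p alphaW 1 1) (ExtW p alphaW 4 1) :=
      ⟨V11A, V41, 2*p+2, ext_move2 p _ 1 4 1⟩
    have t7 : relM (p+2) (ExtW p alphaW 4 1) (ExtW p alphaW 4 3) :=
      ⟨V41, V43, 2*p+3, ext_move1 p _ 4 1 3⟩
    exact (((((((Relation.ReflTransGen.single t1).tail t2).trans S1).tail t3).tail t4).tail
      t5).trans S2).tail t6 |>.tail t7


/-! ### Part B: the padded layered graph -/

def Lc (m : ℕ) : ℕ := 2*m - 1
def Mc (k m : ℕ) : ℕ := Lc m * k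
def Nc (k m : ℕ) : ℕ := 5 * (Mc k m + 2)

def sz (k m : ℕ) (i : ℕ) : ℕ :=
  if i = 0 then 1 else if i = Mc k m + 1 then 1 else if i < k then 1 else szCSP (i / k)

def PRel (k m : ℕ) (i a b : ℕ) : Prop :=
  if i = 0 then True
  else if i = Mc k m then True
  else if Mc k m < i then False
  else if (i+1) % k = 0 then RC (i / k) a b
  else b = a

def Stp (k m : ℕ) (x y : ℕ) : Prop :=
  x / 5 + 1 = y / 5 ∧ x % 5 < sz k m (x/5) ∧ y % 5 < sz k m (y/5) ∧
    PRel k m (x/5) (x%5) (y%5)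

def Gr (k m : ℕ) : SimpleGraph (Fin (Nc k m)) where
  Adj u v := Stp k m u.val v.val ∨ Stp k m v.val u.val
  symm := by
    constructor
    rintro u v (h|h)
    · exact Or.inr h
    · exact Or.inl h
  loopless := by
    constructor
    rintro u (h|h) <;> exact absurd h.1 (by omega)

def sv (k m : ℕ) : Fin (Nc k m) := ⟨0, by unfold Nc; omega⟩
def tv (k m : ℕ) : Fin (Nc k m) := ⟨5*(Mc k m + 1), by unfold Nc; omega⟩

def padL (k m : ℕ) (w : ℕ → ℕ) (i : ℕ) : ℕ :=
  if i < k ∨ Mc k m < i then 0 else w (i/k) % 5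

lemma padL_lt5 (k m : ℕ) (w : ℕ → ℕ) (i : ℕ) : padL k m w i < 5 := by
  unfold padL; split_ifs
  · omega
  · exact Nat.mod_lt _ (by omega)

def pvert (k m : ℕ) (w : ℕ → ℕ) (i : ℕ) : Fin (Nc k m) :=
  ⟨5 * min i (Mc k m + 1) + padL k m w i, by
    have h1 : min i (Mc k m + 1) ≤ Mc k m + 1 := min_le_right _ _
    have h2 := padL_lt5 k m w i
    unfold Nc; omega⟩

lemma pvert_div (k m : ℕ) (w : ℕ → ℕ) {i : ℕ} (hi : i ≤ Mc k m + 1) :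
    (pvert k m w i).val / 5 = i := by
  have h2 := padL_lt5 k m w i
  simp only [pvert, min_eq_left hi]
  omega

lemma pvert_mod (k m : ℕ) (w : ℕ → ℕ) (i : ℕ) :
    (pvert k m w i).val % 5 = padL k m w i := by
  have h2 := padL_lt5 k m w i
  simp only [pvert]
  omega

/-- building a walk through prescribed vertices -/
def mkWalk {V : Type*} (G : SimpleGraph V) (f : ℕ → V) :
    (n : ℕ) → (∀ i, i < n → G.Adj (f i) (f (i+1))) → G.Walk (f 0) (f n)
  | 0, _ => SimpleGraph.Walk.nil
  | (n+1), h => (mkWalk G f n (fun i hi => h i (by omega))).concat (h n (by omega))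

lemma mkWalk_length {V : Type*} (G : SimpleGraph V) (f : ℕ → V) :
    ∀ (n : ℕ) (h : ∀ i, i < n → G.Adj (f i) (f (i+1))), (mkWalk G f n h).length = n := by
  intro n
  induction n with
  | zero => intro h; rfl
  | succ n ih =>
    intro h
    simp only [mkWalk, SimpleGraph.Walk.length_concat, ih]

lemma mkWalk_support {V : Type*} (G : SimpleGraph V) (f : ℕ → V) :
    ∀ (n : ℕ) (h : ∀ i, i < n → G.Adj (f i) (f (i+1))),
      (mkWalk G f n h).support = (List.range (n+1)).map f := by
  intro n
  induction n with
  | zero => intro h; rfl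
  | succ n ih =>
    intro h
    simp only [mkWalk, SimpleGraph.Walk.support_concat, ih, List.concat_eq_append,
      List.range_succ, List.map_append]
    rfl

lemma support_getElem? {V : Type*} {G : SimpleGraph V} :
    ∀ {u v : V} (p : G.Walk u v) (i : ℕ), i ≤ p.length → p.support[i]? = some (p.getVert i) := by
  intro u v p
  induction p with
  | nil =>
    intro i hi
    have : i = 0 := by simpa using hi
    subst this
    rfl
  | cons h p ih =>
    intro i hi
    cases i with
    | zero => simp [SimpleGraph.Walk.support_cons]
    | succ i =>
      simp only [SimpleGraph.Walk.support_cons, List.getElem?_cons_succ,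
        SimpleGraph.Walk.getVert_cons_succ]
      exact ih i (by simpa using hi)

lemma succ_div_eq {k i : ℕ} (hk : 0 < k) (h : (i+1) % k ≠ 0) : (i+1)/k = i/k := by
  rw [Nat.succ_div]
  have : ¬ (k ∣ i + 1) := by
    intro hd
    exact h ((Nat.mod_eq_zero_of_dvd hd))
  simp [this]

lemma succ_div_eq' {k i : ℕ} (hk : 0 < k) (h : (i+1) % k = 0) : (i+1)/k = i/k + 1 := by
  rw [Nat.succ_div]
  have : k ∣ i + 1 := Nat.dvd_of_mod_eq_zero h
  simp [this]

lemma szCSP_le (ℓ : ℕ) : szCSP ℓ ≤ 5 := by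
  unfold szCSP; split_ifs <;> omega

section Graph

variable {k m : ℕ}

lemma block_le (hk : 1 ≤ k) {i : ℕ} (hi : i ≤ Mc k m) : i / k ≤ Lc m := by
  calc i / k ≤ Mc k m / k := Nat.div_le_div_right hi
  _ = Lc m := Nat.mul_div_cancel _ (by omega)

lemma block_ge (hk : 1 ≤ k) {i : ℕ} (hi : k ≤ i) : 1 ≤ i / k :=
  (Nat.one_le_div_iff (by omega)).mpr hi

lemma padL_lt_sz (hk : 1 ≤ k) {w : ℕ → ℕ} (hw : Valid m w) {i : ℕ} (hi : i ≤ Mc k m + 1) :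
    padL k m w i < sz k m i := by
  unfold padL sz
  by_cases h0 : i < k ∨ Mc k m < i
  · rw [if_pos h0]
    split_ifs <;> omega
  · rw [if_neg h0]
    push_neg at h0
    have hj1 : 1 ≤ i / k := block_ge hk h0.1
    have hj2 : i / k ≤ Lc m := block_le hk (by omega)
    have hsz := hw.2 (i/k) hj1 (by unfold Lc at hj2; omega)
    have hle := szCSP_le (i/k)
    rw [if_neg (by omega), if_neg (by omega), if_neg (by omega)]
    rw [Nat.mod_eq_of_lt (by omega)]
    exact hsz

lemma pvert_adj (hk : 1 ≤ k) {w : ℕ → ℕ} (hw : Valid m w) {i : ℕ} (hi : i < Mc k m + 1) :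
    (Gr k m).Adj (pvert k m w i) (pvert k m w (i+1)) := by
  left
  have hd1 := pvert_div k m w (show i ≤ Mc k m + 1 by omega)
  have hd2 := pvert_div k m w (show i+1 ≤ Mc k m + 1 by omega)
  have hm1 := pvert_mod k m w i
  have hm2 := pvert_mod k m w (i+1)
  refine ⟨by omega, ?_, ?_, ?_⟩
  · rw [hm1, hd1]; exact padL_lt_sz hk hw (by omega)
  · rw [hm2, hd2]; exact padL_lt_sz hk hw (by omega)
  · rw [hd1, hm1, hm2]
    unfold PRel
    by_cases h0 : i = 0
    · rw [if_pos h0]; trivial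
    · rw [if_neg h0]
      by_cases hMc : i = Mc k m
      · rw [if_pos hMc]; trivial
      · rw [if_neg hMc, if_neg (by omega)]
        by_cases hb : (i+1) % k = 0
        · rw [if_pos hb]
          by_cases hik : i < k
          · have : i / k = 0 := Nat.div_eq_of_lt hik
            rw [this]
            unfold RC
            rw [if_pos rfl]
            trivial
          · push_neg at hik
            have hj1 : 1 ≤ i / k := block_ge hk hik
            have hj2 : (i+1) / k = i/k + 1 := succ_div_eq' (by omega) hb
            have hj3 : i / k + 1 ≤ Lc m := by
              have := block_le (k := k) (m := m) hk (show i+1 ≤ Mc k m by omega)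
              omega
            unfold padL
            rw [if_neg (by omega), if_neg (by omega), hj2]
            have hs1 := hw.2 (i/k) hj1 (by unfold Lc at hj3; omega)
            have hs2 := hw.2 (i/k+1) (by omega) (by unfold Lc at hj3; omega)
            have hl1 := szCSP_le (i/k)
            have hl2 := szCSP_le (i/k+1)
            rw [Nat.mod_eq_of_lt (by omega), Nat.mod_eq_of_lt (by omega)]
            exact hw.1 (i/k) hj1 (by unfold Lc at hj3; omega)
        · rw [if_neg hb]
          have hdiv : (i+1)/k = i/k := succ_div_eq (by omega) hb
          unfold padL
          by_cases hik : i < k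
          · have : i + 1 < k ∨ i + 1 = k := by omega
            rcases this with hc | hc
            · rw [if_pos (Or.inl hik), if_pos (Or.inl hc)]
            · exfalso; apply hb; rw [hc]; exact Nat.mod_self k
          · rw [if_neg (by omega), if_neg (by omega), hdiv]

lemma pvert_zero (hk : 1 ≤ k) (w : ℕ → ℕ) : pvert k m w 0 = sv k m := by
  apply Fin.ext
  simp only [pvert, sv, Nat.zero_min, padL]
  rw [if_pos (Or.inl (by omega))]

lemma pvert_last (w : ℕ → ℕ) : pvert k m w (Mc k m + 1) = tv k m := by
  apply Fin.ext
  simp only [pvert, tv, min_self, padL]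
  rw [if_pos (Or.inr (by omega))]
  omega

def cw (hk : 1 ≤ k) (w : ℕ → ℕ) (hw : Valid m w) : (Gr k m).Walk (sv k m) (tv k m) :=
  (mkWalk (Gr k m) (pvert k m w) (Mc k m + 1)
    (fun i hi => pvert_adj hk hw hi)).copy (pvert_zero hk w) (pvert_last w)

lemma cw_length (hk : 1 ≤ k) {w : ℕ → ℕ} (hw : Valid m w) : (cw hk w hw).length = Mc k m + 1 := by
  simp [cw, mkWalk_length]

lemma cw_support (hk : 1 ≤ k) {w : ℕ → ℕ} (hw : Valid m w) :
    (cw hk w hw).support = (List.range (Mc k m + 2)).map (pvert k m w) := by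
  have : Mc k m + 1 + 1 = Mc k m + 2 := by omega
  simp [cw, mkWalk_support, this]

lemma walk_bound : ∀ {u v : Fin (Nc k m)} (p : (Gr k m).Walk u v),
    v.val / 5 ≤ u.val / 5 + p.length := by
  intro u v p
  induction p with
  | nil => simp
  | cons h p ih =>
    rcases (show Stp k m _ _ ∨ Stp k m _ _ from h) with h | h
    · have := h.1; simp only [SimpleGraph.Walk.length_cons]; omega
    · have := h.1; simp only [SimpleGraph.Walk.length_cons]; omega

lemma tv_div : (tv k m).val / 5 = Mc k m + 1 := by
  show (5*(Mc k m + 1)) / 5 = Mc k m + 1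
  omega

lemma sv_div : (sv k m).val / 5 = 0 := by simp [sv]

lemma dist_st (hk : 1 ≤ k) : (Gr k m).dist (sv k m) (tv k m) = Mc k m + 1 := by
  apply le_antisymm
  · have h1 := SimpleGraph.dist_le (cw (k := k) (m := m) hk alphaW (valid_alpha m))
    rwa [cw_length hk (valid_alpha m)] at h1
  · obtain ⟨p, hp⟩ := (SimpleGraph.Reachable.exists_walk_length_eq_dist
      ⟨cw (k := k) (m := m) hk alphaW (valid_alpha m)⟩)
    have := walk_bound p
    rw [tv_div, sv_div] at this
    omega

end Graph

section Decode

variable {k m : ℕ}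

/-- positions along a shortest walk -/
lemma getVert_pos_le (p : (Gr k m).Walk (sv k m) (tv k m)) :
    ∀ i, (p.getVert i).val / 5 ≤ i := by
  intro i
  induction i with
  | zero => rw [p.getVert_zero, sv_div]
  | succ i ih =>
    by_cases hi : i < p.length
    · have hadj := p.adj_getVert_succ hi
      rcases hadj with h | h
      · have := h.1; omega
      · have := h.1; omega
    · rw [p.getVert_of_length_le (by omega : p.length ≤ i+1)]
      rw [p.getVert_of_length_le (by omega : p.length ≤ i)] at ih
      omega

lemma getVert_pos_ge (p : (Gr k m).Walk (sv k m) (tv k m)) (hp : p.length = Mc k m + 1) :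
    ∀ j, j ≤ Mc k m + 1 → Mc k m + 1 - j ≤ (p.getVert (Mc k m + 1 - j)).val / 5 := by
  intro j
  induction j with
  | zero =>
    intro _
    have : p.getVert (Mc k m + 1 - 0) = tv k m := by
      rw [Nat.sub_zero, ← hp]; exact p.getVert_length
    rw [this, tv_div]
    omega
  | succ j ih =>
    intro hj
    have hi : Mc k m + 1 - (j+1) < p.length := by omega
    have hadj := p.adj_getVert_succ hi
    have heq : Mc k m + 1 - (j+1) + 1 = Mc k m + 1 - j := by omega
    rw [heq] at hadj
    have hih := ih (by omega)
    rcases hadj with h | h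
    · have := h.1; omega
    · have := h.1; omega

lemma getVert_pos (p : (Gr k m).Walk (sv k m) (tv k m)) (hp : p.length = Mc k m + 1)
    {i : ℕ} (hi : i ≤ Mc k m + 1) : (p.getVert i).val / 5 = i := by
  have h1 := getVert_pos_le p i
  have h2 := getVert_pos_ge p hp (Mc k m + 1 - i) (by omega)
  rw [show Mc k m + 1 - (Mc k m + 1 - i) = i by omega] at h2
  omega

lemma step_forward (p : (Gr k m).Walk (sv k m) (tv k m)) (hp : p.length = Mc k m + 1)
    {i : ℕ} (hi : i < Mc k m + 1) :
    Stp k m (p.getVert i).val (p.getVert (i+1)).val := by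
  have hadj := p.adj_getVert_succ (by omega : i < p.length)
  have h1 := getVert_pos p hp (show i ≤ Mc k m + 1 by omega)
  have h2 := getVert_pos p hp (show i+1 ≤ Mc k m + 1 by omega)
  rcases hadj with h | h
  · exact h
  · exact absurd h.1 (by omega)

/-- the CSP word read off a shortest walk -/
def wrd (p : (Gr k m).Walk (sv k m) (tv k m)) : ℕ → ℕ :=
  fun ℓ => (p.getVert (ℓ*k)).val % 5

lemma wrd_size (hk : 1 ≤ k) (p : (Gr k m).Walk (sv k m) (tv k m))
    (hp : p.length = Mc k m + 1) {ℓ : ℕ} (h1 : 1 ≤ ℓ) (h2 : ℓ ≤ Lc m) :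
    wrd p ℓ < szCSP ℓ := by
  have hlk : ℓ * k ≤ Mc k m := by
    unfold Mc; exact Nat.mul_le_mul_right k h2
  have hlk0 : k ≤ ℓ * k := Nat.le_mul_of_pos_left k (by omega)
  have hst := step_forward p hp (show ℓ*k - 1 < Mc k m + 1 by omega)
  rw [show ℓ*k - 1 + 1 = ℓ*k by omega] at hst
  have hpos := getVert_pos p hp (show ℓ*k ≤ Mc k m + 1 by omega)
  have := hst.2.2.1
  rw [hpos] at this
  unfold sz at this
  have hlk1 : k ≤ ℓ * k := Nat.le_mul_of_pos_left k (by omega)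
  rw [if_neg (by omega), if_neg (by omega), if_neg (by omega),
    Nat.mul_div_cancel ℓ (by omega)] at this
  exact this

lemma copies (hk : 1 ≤ k) (p : (Gr k m).Walk (sv k m) (tv k m))
    (hp : p.length = Mc k m + 1) {ℓ : ℕ} (h1 : 1 ≤ ℓ) (h2 : ℓ + 1 ≤ Lc m) :
    ∀ r, r ≤ k - 1 → (p.getVert (ℓ*k + r)).val % 5 = wrd p ℓ := by
  have hlk : ℓ * k + k ≤ Mc k m := by
    have : (ℓ+1) * k ≤ Lc m * k := Nat.mul_le_mul_right k h2
    rw [Nat.succ_mul] at this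
    exact this
  have hlk0 : k ≤ ℓ * k := Nat.le_mul_of_pos_left k (by omega)
  intro r
  induction r with
  | zero => intro _; rfl
  | succ r ih =>
    intro hr
    have hih := ih (by omega)
    have hst := step_forward p hp (show ℓ*k + r < Mc k m + 1 by omega)
    have hpos := getVert_pos p hp (show ℓ*k + r ≤ Mc k m + 1 by omega)
    have hPR := hst.2.2.2
    rw [hpos] at hPR
    unfold PRel at hPR
    rw [if_neg (by omega), if_neg (by omega), if_neg (by omega)] at hPR
    have hmod : (ℓ*k + r + 1) % k = r + 1 := by
      rw [show ℓ*k + r + 1 = ℓ*k + (r+1) by omega, Nat.mul_comm]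
      rw [Nat.mul_add_mod k ℓ (r+1)]
      exact Nat.mod_eq_of_lt (by omega)
    rw [if_neg (by omega)] at hPR
    rw [show ℓ*k + (r+1) = ℓ*k + r + 1 by omega, hPR, hih]

lemma wrd_valid (hk : 1 ≤ k) (hm : 1 ≤ m) (p : (Gr k m).Walk (sv k m) (tv k m))
    (hp : p.length = Mc k m + 1) : Valid m (wrd p) := by
  constructor
  · intro ℓ hℓ1 hℓ2
    have h2 : ℓ + 1 ≤ Lc m := by unfold Lc; omega
    have hlk : ℓ * k + k ≤ Mc k m := by
      have : (ℓ+1) * k ≤ Lc m * k := Nat.mul_le_mul_right k h2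
      rw [Nat.succ_mul] at this
      exact this
    have hlk0 : k ≤ ℓ * k := Nat.le_mul_of_pos_left k (by omega)
    have hcop := copies hk p hp hℓ1 h2 (k-1) (by omega)
    have hst := step_forward p hp (show ℓ*k + (k-1) < Mc k m + 1 by omega)
    have hpos := getVert_pos p hp (show ℓ*k + (k-1) ≤ Mc k m + 1 by omega)
    have hPR := hst.2.2.2
    rw [hpos] at hPR
    unfold PRel at hPR
    rw [if_neg (by omega), if_neg (by omega), if_neg (by omega)] at hPR
    have hmod : (ℓ*k + (k-1) + 1) % k = 0 := by
      rw [show ℓ*k + (k-1) + 1 = (ℓ+1) * k by rw [Nat.succ_mul]; omega]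
      exact Nat.mul_mod_left _ _
    rw [if_pos hmod] at hPR
    have hdiv : (ℓ*k + (k-1)) / k = ℓ := by
      rw [Nat.mul_comm, Nat.mul_add_div (by omega)]
      rw [Nat.div_eq_of_lt (by omega)]
      omega
    rw [hdiv] at hPR
    have hnext : ℓ*k + (k-1) + 1 = (ℓ+1) * k := by rw [Nat.succ_mul]; omega
    rw [hcop, hnext] at hPR
    exact hPR
  · intro ℓ hℓ1 hℓ2
    exact wrd_size hk p hp hℓ1 (by unfold Lc; omega)

lemma kmove_words (hk : 1 ≤ k) (p q : (Gr k m).Walk (sv k m) (tv k m))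
    (hp : p.length = Mc k m + 1) (hq : q.length = Mc k m + 1)
    (h : kMove k p.support q.support) :
    ∃ ℓ₀, ∀ ℓ, ℓ ≠ ℓ₀ → wrd p ℓ = wrd q ℓ := by
  obtain ⟨hlen, a, mm, hmk, ha1, hbound, hout⟩ := h
  refine ⟨(a + k - 1)/k, ?_⟩
  intro ℓ hne
  have hd1 : k * ((a+k-1)/k) + (a+k-1)%k = a+k-1 := Nat.div_add_mod _ _
  have hd2 : (a+k-1) % k < k := Nat.mod_lt _ (by omega)
  have hwin : ℓ * k < a ∨ a + mm ≤ ℓ * k := by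
    rcases Nat.lt_or_ge ℓ ((a + k - 1)/k) with hc | hc
    · left
      have h3 : (ℓ+1) * k ≤ ((a + k - 1)/k) * k := Nat.mul_le_mul_right k hc
      rw [Nat.succ_mul] at h3
      have h5 : ((a + k - 1)/k) * k = k * ((a + k - 1)/k) := Nat.mul_comm _ _
      omega
    · have hcc : (a + k - 1)/k + 1 ≤ ℓ := by omega
      right
      have h3 : ((a + k - 1)/k + 1) * k ≤ ℓ * k := Nat.mul_le_mul_right k hcc
      rw [Nat.succ_mul] at h3
      have h5 : ((a + k - 1)/k) * k = k * ((a + k - 1)/k) := Nat.mul_comm _ _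
      omega
  by_cases hL : ℓ * k ≤ Mc k m + 1
  · have e1 := support_getElem? p (ℓ*k) (by omega)
    have e2 := support_getElem? q (ℓ*k) (by omega)
    have hoo := hout (ℓ*k) hwin
    rw [e1, e2] at hoo
    unfold wrd
    rw [Option.some.inj hoo]
  · unfold wrd
    rw [p.getVert_of_length_le (by omega), q.getVert_of_length_le (by omega)]

lemma wrd_move (hk : 1 ≤ k) (hm : 1 ≤ m) (p q : (Gr k m).Walk (sv k m) (tv k m))
    (hp : p.length = Mc k m + 1) (hq : q.length = Mc k m + 1)
    (hmv : kMove k p.support q.support) :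
    phi m (wrd q) ≤ phi m (wrd p) + 1 := by
  obtain ⟨ℓ₀, hd⟩ := kmove_words hk p q hp hq hmv
  exact (move m (wrd p) (wrd q) (wrd_valid hk hm p hp) (wrd_valid hk hm q hq) ℓ₀ hd).1

lemma cw_getVert (hk : 1 ≤ k) {w : ℕ → ℕ} (hw : Valid m w) {i : ℕ} (hi : i ≤ Mc k m + 1) :
    (cw hk w hw).getVert i = pvert k m w i := by
  have h1 := support_getElem? (cw hk w hw) i (by rw [cw_length hk hw]; omega)
  rw [cw_support hk hw] at h1
  have h2 : ((List.range (Mc k m + 2)).map (pvert k m w))[i]? = some (pvert k m w i) := by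
    simp [List.getElem?_map, List.getElem?_range (show i < Mc k m + 2 by omega)]
  rw [h2] at h1
  exact (Option.some.inj h1).symm

lemma wrd_cw (hk : 1 ≤ k) {w : ℕ → ℕ} (hw : Valid m w) {ℓ : ℕ}
    (h1 : 1 ≤ ℓ) (h2 : ℓ ≤ Lc m) (h5 : w ℓ < 5) : wrd (cw hk w hw) ℓ = w ℓ := by
  have hlk : ℓ * k ≤ Mc k m := Nat.mul_le_mul_right k h2
  have hlk0 : k ≤ ℓ * k := Nat.le_mul_of_pos_left k (by omega)
  unfold wrd
  rw [cw_getVert hk hw (by omega), pvert_mod]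
  unfold padL
  rw [if_neg (by omega), Nat.mul_div_cancel ℓ (by omega), Nat.mod_eq_of_lt h5]

lemma phi_wrd_cw (hk : 1 ≤ k) {w : ℕ → ℕ} (hw : Valid m w)
    (h5 : ∀ ℓ, 1 ≤ ℓ → ℓ ≤ Lc m → w ℓ < 5) : phi m (wrd (cw hk w hw)) = phi m w := by
  apply phi_congr
  intro ℓ u1 u2
  have hc : ℓ ≤ Lc m := by unfold Lc; omega
  exact wrd_cw hk hw u1 hc (h5 ℓ u1 hc)

lemma alphaW_lt5 (ℓ : ℕ) : alphaW ℓ < 5 := by unfold alphaW; split_ifs <;> omega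

lemma betaW_lt5 (m ℓ : ℕ) : betaW m ℓ < 5 := by
  unfold betaW alphaW; split_ifs <;> omega

lemma kstep_cw (hk : 1 ≤ k) (hm : 1 ≤ m) {w w' : ℕ → ℕ} (hr : relM m w w')
    (hw : Valid m w) (hw' : Valid m w') :
    KStep (Gr k m) (sv k m) (tv k m) k (cw hk w hw) (cw hk w' hw') := by
  obtain ⟨-, -, ℓ₀, hd⟩ := hr
  have hsupp : ∀ (ww : ℕ→ℕ) (hww : Valid m ww) (j : ℕ),
      (cw hk ww hww).support[j]? =
        if j < Mc k m + 2 then some (pvert k m ww j) else none := by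
    intro ww hww j
    rw [cw_support hk hww]
    by_cases hj : j < Mc k m + 2
    · rw [if_pos hj]
      simp [List.getElem?_map, List.getElem?_range hj]
    · rw [if_neg hj]
      simp only [List.getElem?_eq_none_iff, List.length_map, List.length_range]
      omega
  have hlen1 : (cw hk w hw).support.length = Mc k m + 2 := by
    rw [cw_support hk hw]; simp
  have hlen2 : (cw hk w' hw').support.length = Mc k m + 2 := by
    rw [cw_support hk hw']; simp
  have hpadeq : ∀ j, ((j < k ∨ Mc k m < j) ∨ j / k ≠ ℓ₀) → padL k m w j = padL k m w' j := by
    intro j hj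
    unfold padL
    by_cases hc : j < k ∨ Mc k m < j
    · rw [if_pos hc, if_pos hc]
    · rw [if_neg hc, if_neg hc]
      rcases hj with hj | hj
      · exact absurd hj hc
      · rw [hd (j/k) hj]
  have hpv : ∀ j, padL k m w j = padL k m w' j → pvert k m w j = pvert k m w' j := by
    intro j hpp
    apply Fin.ext
    simp only [pvert]
    rw [hpp]
  refine ⟨by rw [cw_length hk hw, dist_st hk], by rw [cw_length hk hw', dist_st hk],
    by omega, ?_⟩
  by_cases hc1 : 1 ≤ ℓ₀ ∧ ℓ₀ + 1 ≤ Lc m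
  · refine ⟨ℓ₀ * k, k, le_refl k, ?_, ?_, ?_⟩
    · have : k ≤ ℓ₀ * k := Nat.le_mul_of_pos_left k (by omega)
      omega
    · have hb : (ℓ₀+1) * k ≤ Lc m * k := Nat.mul_le_mul_right k hc1.2
      rw [Nat.succ_mul] at hb
      have : Lc m * k = Mc k m := rfl
      omega
    · intro j hj
      rw [hsupp w hw j, hsupp w' hw' j]
      by_cases hjlen : j < Mc k m + 2
      · rw [if_pos hjlen, if_pos hjlen]
        congr 1
        apply hpv
        apply hpadeq
        right
        rcases hj with hj | hj
        · have : j / k < ℓ₀ := (Nat.div_lt_iff_lt_mul (by omega)).mpr hj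
          omega
        · have : ℓ₀ + 1 ≤ j / k := by
            rw [Nat.le_div_iff_mul_le (by omega), Nat.succ_mul]
            omega
          omega
      · rw [if_neg hjlen, if_neg hjlen]
  · by_cases hc2 : ℓ₀ = Lc m ∧ 1 ≤ ℓ₀
    · refine ⟨Mc k m, 1, hk, ?_, by omega, ?_⟩
      · have h1 : 1 ≤ Lc m := by omega
        have : 1 * 1 ≤ Lc m * k := Nat.mul_le_mul h1 hk
        have hMc : Lc m * k = Mc k m := rfl
        omega
      · intro j hj
        rw [hsupp w hw j, hsupp w' hw' j]
        by_cases hjlen : j < Mc k m + 2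
        · rw [if_pos hjlen, if_pos hjlen]
          congr 1
          apply hpv
          apply hpadeq
          rcases hj with hj | hj
          · right
            have : j / k < Lc m := by
              apply (Nat.div_lt_iff_lt_mul (by omega : 0 < k)).mpr
              have : Lc m * k = Mc k m := rfl
              omega
            omega
          · left; right; omega
        · rw [if_neg hjlen, if_neg hjlen]
    · refine ⟨1, 0, by omega, le_refl 1, by omega, ?_⟩
      intro j _
      rw [hsupp w hw j, hsupp w' hw' j]
      by_cases hjlen : j < Mc k m + 2
      · rw [if_pos hjlen, if_pos hjlen]
        congr 1
        apply hpv
        apply hpadeq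
        by_cases hc : j < k ∨ Mc k m < j
        · left; exact hc
        · right
          push_neg at hc
          have hj1 : 1 ≤ j / k := block_ge hk hc.1
          have hj2 : j / k ≤ Lc m := block_le hk hc.2
          omega
      · rw [if_neg hjlen, if_neg hjlen]

lemma lift_rtg (hk : 1 ≤ k) (hm : 1 ≤ m) :
    ∀ (w' : ℕ→ℕ), Relation.ReflTransGen (relM m) alphaW w' → ∀ (h' : Valid m w'),
      Relation.ReflTransGen (KStep (Gr k m) (sv k m) (tv k m) k)
        (cw hk alphaW (valid_alpha m)) (cw hk w' h') := by
  intro w' hrtg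
  induction hrtg with
  | refl => intro h'; exact Relation.ReflTransGen.refl
  | tail hab hbc ih =>
    intro h'
    exact (ih hbc.1).tail (kstep_cw hk hm hbc hbc.1 h')

end Decode

end KRec

open KRec

/-- There is a constant `c > 0` such that for every `k ≥ 1` there are arbitrarily
large `N` and an `N`-vertex simple graph with two `k`-reconfigurable `s`–`t` shortest
paths `P`, `Q` such that every sequence of `k`-moves transforming `P` into `Q` has
length at least `2 ^ (c * N / k)`. -/
theorem exists_exponential_kReconf_distance :
    ∃ c : ℝ, 0 < c ∧ ∀ k : ℕ, 1 ≤ k → ∀ N₀ : ℕ, ∃ N : ℕ, N₀ ≤ N ∧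
      ∃ (G : SimpleGraph (Fin N)) (s t : Fin N) (P Q : G.Walk s t),
        P.length = G.dist s t ∧ Q.length = G.dist s t ∧
        KReconfigurable G s t k P Q ∧
        ∀ (n : ℕ) (f : ℕ → G.Walk s t), f 0 = P → f n = Q →
          (∀ i ≤ n, (f i).length = G.dist s t) →
          (∀ i < n, kMove k (f i).support (f (i + 1)).support) →
          (2 : ℝ) ^ (c * N / k) ≤ (n : ℝ) := by
  
  refine ⟨1/100, by norm_num, ?_⟩
  intro k hk N₀
  obtain ⟨q, hm2, hmN₀⟩ : ∃ q, 2 ≤ q + 1 ∧ N₀ ≤ q + 1 := by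
    refine ⟨max 2 N₀ - 1, ?_, ?_⟩
    · have h1 := le_max_left 2 N₀; omega
    · have h1 := le_max_left 2 N₀; have h2 := le_max_right 2 N₀; omega
  have hm1 : 1 ≤ q + 1 := by omega
  refine ⟨Nc k (q+1), ?_, Gr k (q+1), sv k (q+1), tv k (q+1),
    cw hk alphaW (valid_alpha (q+1)), cw hk (betaW (q+1)) (valid_beta q), ?_, ?_, ?_, ?_⟩
  · -- N₀ ≤ N
    have h1 : Lc (q+1) ≤ Lc (q+1) * k := Nat.le_mul_of_pos_right _ (by omega)
    have h2 : q + 1 ≤ Lc (q+1) := by unfold Lc; omega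
    have : Nc k (q+1) = 5 * (Lc (q+1) * k + 2) := rfl
    omega
  · rw [cw_length hk (valid_alpha (q+1)), dist_st hk]
  · rw [cw_length hk (valid_beta q), dist_st hk]
  · exact lift_rtg hk hm1 (betaW (q+1)) (chain q) (valid_beta q)
  · intro n f h0 hn hlen hmv
    have hL : ∀ i, i ≤ n → (f i).length = Mc k (q+1) + 1 := by
      intro i hi
      rw [hlen i hi, dist_st hk]
    have key : ∀ i, i ≤ n → phi (q+1) (wrd (f i)) ≤ phi (q+1) (wrd (f 0)) + i := by
      intro i
      induction i with
      | zero => intro _; omega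
      | succ i ih =>
        intro hi
        have h1 := ih (by omega)
        have h2 := wrd_move hk hm1 (f i) (f (i+1)) (hL i (by omega)) (hL (i+1) hi)
          (hmv i (by omega))
        omega
    have hphi0 : phi (q+1) (wrd (f 0)) = 0 := by
      rw [h0, phi_wrd_cw hk (valid_alpha (q+1)) (fun ℓ _ _ => alphaW_lt5 ℓ), phi_alpha]
    have hphin : phi (q+1) (wrd (f n)) = Nv (q+1) := by
      rw [hn, phi_wrd_cw hk (valid_beta q) (fun ℓ _ _ => betaW_lt5 (q+1) ℓ), phi_beta]
    have hNvn : Nv (q+1) ≤ n := by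
      have := key n (le_refl n)
      omega
    -- 2^(q+1) ≤ Nv (q+1)
    have hpow : 2^(q+1) ≤ Nv (q+1) := by
      have h4 : (2:ℕ)^2 ≤ 2^(q+1) := Nat.pow_le_pow_right (by omega) (by omega)
      have hp : (2:ℕ)^(q+1+2) = 2^(q+1) * 4 := by ring
      unfold Nv
      omega
    -- N ≤ 100 * ((q+1) * k)
    have hNk : Nc k (q+1) ≤ 100 * ((q+1) * k) := by
      have e1 : Lc (q+1) * k ≤ 2*((q+1)*k) := by
        have h := Nat.mul_le_mul_right k (show Lc (q+1) ≤ 2*(q+1) by unfold Lc; omega)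
        calc Lc (q+1) * k ≤ 2*(q+1) * k := h
        _ = 2*((q+1)*k) := by ring
      have e2 : 2 ≤ (q+1)*k := by
        have := Nat.mul_le_mul hm2 hk
        simpa using this
      have : Nc k (q+1) = 5 * (Lc (q+1) * k + 2) := rfl
      omega
    have hkR : (0:ℝ) < (k:ℝ) := by exact_mod_cast (show 0 < k by omega)
    have hexp : (1/100 : ℝ) * (Nc k (q+1) : ℕ) / (k:ℝ) ≤ ((q+1 : ℕ):ℝ) := by
      rw [div_le_iff₀ hkR]
      have hcast : ((Nc k (q+1) : ℕ) : ℝ) ≤ 100 * (((q+1:ℕ)) * (k:ℕ) : ℕ) := by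
        exact_mod_cast hNk
      push_cast at hcast ⊢
      nlinarith
    have h2m : (2:ℝ) ^ ((1/100:ℝ) * (Nc k (q+1) : ℕ) / (k:ℝ)) ≤ (2:ℝ) ^ (((q+1:ℕ):ℝ)) :=
      Real.rpow_le_rpow_of_exponent_le one_le_two hexp
    have hnat : (2:ℝ) ^ (((q+1:ℕ):ℝ)) = ((2^(q+1) : ℕ) : ℝ) := by
      rw [Real.rpow_natCast]
      push_cast
      ring
    have hfin : ((2^(q+1) : ℕ) : ℝ) ≤ (n:ℝ) := by
      exact_mod_cast le_trans hpow hNvn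
    calc (2:ℝ) ^ ((1/100:ℝ) * (Nc k (q+1) : ℕ) / (k:ℝ)) ≤ ((2^(q+1) : ℕ) : ℝ) := by
          rw [← hnat]; exact h2m
    _ ≤ (n:ℝ) := hfin
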